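/- Let G be a group, let φ : Multiplicative (ZMod 2) →* MulAut (G × G) be a homomorphism with φ (Multiplicative.ofAdd 1) equal to the coordinate-swap automorphism MulEquiv.prodComm G G, and let W = (G × G) ⋊[φ] Multiplicative (ZMod 2). Let δ : G →* W be the diagonal embedding, fix g : G, and let w₀ = ⟨(g, 1), Multiplicative.ofAdd 1⟩. If the mutual commutator of the normal closure of g with G is all of G (⁅Subgroup.normalClosure {g}, (⊤ : Subgroup G)⁆ = ⊤), then Subgroup.closure (Set.range δ ∪ {w₀}) = (⊤ : Subgroup W), i.e., the wreath product has no proper subgroup containing the diagonal copy of G together with the square root w₀ of δ g. -/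

import Mathlib

open scoped commutatorElement

/-- If `⁅⟨⟨g⟩⟩, G⁆ = G`, then the wreath product `G ≀ ℤ₂` has no proper subgroup
containing the diagonal copy of `G` and the square root `w₀` of `δ g`. -/
theorem closure_eq_top_of_commutator_eq_top (G : Type) [Group G]
    (φ : Multiplicative (ZMod 2) →* MulAut (G × G))
    (hφ : φ (Multiplicative.ofAdd 1) = (MulEquiv.prodComm : (G × G) ≃* (G × G)))
    (δ : G →* (G × G) ⋊[φ] Multiplicative (ZMod 2))
    (hδ : ∀ g : G, δ g = ⟨(g, g), 1⟩)
    (g : G)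
    (hg : ⁅Subgroup.normalClosure {g}, (⊤ : Subgroup G)⁆ = ⊤) :
    Subgroup.closure (Set.range δ ∪ {⟨(g, 1), Multiplicative.ofAdd 1⟩}) =
      (⊤ : Subgroup ((G × G) ⋊[φ] Multiplicative (ZMod 2))) := by
  set W := (G × G) ⋊[φ] Multiplicative (ZMod 2) with hW
  set H := Subgroup.closure (Set.range δ ∪ {(⟨(g, 1), Multiplicative.ofAdd 1⟩ : W)}) with hH
  set w₀ : W := ⟨(g, 1), Multiplicative.ofAdd 1⟩ with hw₀
  have hδH : ∀ a : G, δ a ∈ H := fun a => Subgroup.subset_closure (Or.inl ⟨a, rfl⟩)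
  have hwH : w₀ ∈ H := Subgroup.subset_closure (Or.inr rfl)
  have hinv : (Multiplicative.ofAdd (1 : ZMod 2))⁻¹ = Multiplicative.ofAdd 1 := by decide
  have hsq : Multiplicative.ofAdd (1 : ZMod 2) * Multiplicative.ofAdd 1 = 1 := by decide
  have hφ1 : ∀ p : G × G, φ 1 p = p := by intro p; rw [map_one]; rfl
  have hφt : ∀ p : G × G, φ (Multiplicative.ofAdd 1) p = p.swap := by intro p; rw [hφ]; rfl
  have hmulW : ∀ (p q : G × G) (s t : Multiplicative (ZMod 2)),
      (⟨p, s⟩ : W) * ⟨q, t⟩ = ⟨p * φ s q, s * t⟩ := fun _ _ _ _ => rfl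
  have hinvW : ∀ (p : G × G) (s : Multiplicative (ZMod 2)),
      (⟨p, s⟩ : W)⁻¹ = ⟨φ s⁻¹ p⁻¹, s⁻¹⟩ := fun _ _ => rfl
  have hmul00 : ∀ x y u v : G, (⟨(x, y), 1⟩ : W) * ⟨(u, v), 1⟩ = ⟨(x * u, y * v), 1⟩ := by
    intro x y u v
    rw [hmulW, hφ1, mul_one, Prod.mk_mul_mk]
  have hinv00 : ∀ x y : G, (⟨(x, y), 1⟩ : W)⁻¹ = ⟨(x⁻¹, y⁻¹), 1⟩ := by
    intro x y
    rw [hinvW, inv_one, hφ1, Prod.inv_mk]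
  have hKmul : ∀ x y : G, (⟨(x, 1), 1⟩ : W) ∈ H → (⟨(y, 1), 1⟩ : W) ∈ H →
      (⟨(x * y, 1), 1⟩ : W) ∈ H := by
    intro x y hx hy
    have := mul_mem hx hy
    rwa [hmul00, mul_one] at this
  have hKinv : ∀ x : G, (⟨(x, 1), 1⟩ : W) ∈ H → (⟨(x⁻¹, 1), 1⟩ : W) ∈ H := by
    intro x hx
    have := inv_mem hx
    rwa [hinv00, inv_one] at this
  let K : Subgroup G :=
    { carrier := {x | (⟨(x, 1), 1⟩ : W) ∈ H}
      one_mem' := by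
        have e : (⟨((1 : G), 1), 1⟩ : W) = 1 := rfl
        show (⟨((1 : G), 1), 1⟩ : W) ∈ H
        rw [e]; exact one_mem H
      mul_mem' := fun {x y} hx hy => hKmul x y hx hy
      inv_mem' := fun {x} hx => hKinv x hx }
  have hKmem : ∀ x : G, x ∈ K ↔ (⟨(x, 1), 1⟩ : W) ∈ H := fun _ => Iff.rfl
  have hKconj : ∀ c x : G, x ∈ K → c * x * c⁻¹ ∈ K := by
    intro c x hx
    have h1 := mul_mem (mul_mem (hδH c) ((hKmem x).1 hx)) (inv_mem (hδH c))
    have e : δ c * (⟨(x, 1), 1⟩ : W) * (δ c)⁻¹ = ⟨(c * x * c⁻¹, 1), 1⟩ := by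
      rw [hδ]
      simp only [hmulW, hinvW, hφ1, hφt, hinv, hsq, Prod.inv_mk, Prod.swap_prod_mk,
        Prod.mk_mul_mk, mul_one, one_mul, inv_one, mul_inv_cancel, inv_mul_cancel,
        mul_assoc, SemidirectProduct.ext_iff, Prod.mk.injEq, and_self, and_true, true_and]
    rw [e] at h1
    exact (hKmem _).2 h1
  haveI hKn : K.Normal := ⟨fun x hx c => hKconj c x hx⟩
  have hcomm : ∀ a : G, ⁅g, a⁆ ∈ K := by
    intro a
    have h1 := mul_mem (mul_mem (mul_mem hwH (hδH a)) (inv_mem hwH)) (inv_mem (hδH a))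
    have e : w₀ * δ a * w₀⁻¹ * (δ a)⁻¹ = (⟨(g * a * g⁻¹ * a⁻¹, 1), 1⟩ : W) := by
      rw [hδ, hw₀]
      simp only [hmulW, hinvW, hφ1, hφt, hinv, hsq, Prod.inv_mk, Prod.swap_prod_mk,
        Prod.mk_mul_mk, mul_one, one_mul, inv_one, mul_inv_cancel, inv_mul_cancel,
        mul_assoc, SemidirectProduct.ext_iff, Prod.mk.injEq, and_self, and_true, true_and]
    rw [e] at h1
    exact (hKmem _).2 h1
  let C : Subgroup G := (Subgroup.center (G ⧸ K)).comap (QuotientGroup.mk' K)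
  haveI hCn : C.Normal := inferInstance
  have hgC : g ∈ C := by
    simp only [C, Subgroup.mem_comap, Subgroup.mem_center_iff]
    intro z
    induction z using QuotientGroup.induction_on with
    | H b =>
      show ((b : G ⧸ K) * ((g : G) : G ⧸ K)) = ((g : G) : G ⧸ K) * (b : G ⧸ K)
      rw [← QuotientGroup.mk_mul, ← QuotientGroup.mk_mul, QuotientGroup.eq]
      have hk : g⁻¹ * ⁅g, b⁻¹⁆⁻¹ * g⁻¹⁻¹ ∈ K := hKconj g⁻¹ _ (inv_mem (hcomm b⁻¹))
      have e : g⁻¹ * ⁅g, b⁻¹⁆⁻¹ * g⁻¹⁻¹ = (b * g)⁻¹ * (g * b) := by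
        rw [commutatorElement_def]; group
      rwa [e] at hk
  have hN : Subgroup.normalClosure {g} ≤ C :=
    Subgroup.normalClosure_le_normal (by simpa using hgC)
  have hKtop : (⊤ : Subgroup G) ≤ K := by
    rw [← hg]
    refine Subgroup.commutator_le.2 fun n hn b _ => ?_
    have hcenter : ((n : G) : G ⧸ K) ∈ Subgroup.center (G ⧸ K) := hN hn
    have h1 : ((⁅n, b⁆ : G) : G ⧸ K) = 1 := by
      have e : ((⁅n, b⁆ : G) : G ⧸ K) = ⁅((n : G) : G ⧸ K), ((b : G) : G ⧸ K)⁆ := by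
        simp [commutatorElement_def]
      rw [e]
      exact commutatorElement_eq_one_iff_commute.2
        ((Subgroup.mem_center_iff.1 hcenter _).symm)
    exact (QuotientGroup.eq_one_iff _).1 h1
  have hleft : ∀ x : G, (⟨(x, 1), 1⟩ : W) ∈ H := fun x =>
    (hKmem x).1 (hKtop (Subgroup.mem_top x))
  have hright : ∀ y : G, (⟨(1, y), 1⟩ : W) ∈ H := by
    intro y
    have h1 := mul_mem (mul_mem hwH (hleft y)) (inv_mem hwH)
    have e : w₀ * (⟨(y, 1), 1⟩ : W) * w₀⁻¹ = ⟨(1, y), 1⟩ := by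
      rw [hw₀]
      simp only [hmulW, hinvW, hφ1, hφt, hinv, hsq, Prod.inv_mk, Prod.swap_prod_mk,
        Prod.mk_mul_mk, mul_one, one_mul, inv_one, mul_inv_cancel, inv_mul_cancel,
        mul_assoc, SemidirectProduct.ext_iff, Prod.mk.injEq, and_self, and_true, true_and]
    rwa [e] at h1
  rw [eq_top_iff]
  rintro ⟨⟨a, b⟩, t⟩ -
  have hcases : ∀ s : Multiplicative (ZMod 2), s = 1 ∨ s = Multiplicative.ofAdd 1 := by
    decide
  rcases hcases t with rfl | rfl
  · have e : (⟨(a, b), 1⟩ : W) = ⟨(a, 1), 1⟩ * ⟨(1, b), 1⟩ := by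
      rw [hmul00, mul_one, one_mul]
    rw [e]
    exact mul_mem (hleft a) (hright b)
  · have e : (⟨(a, b), Multiplicative.ofAdd 1⟩ : W) =
        (⟨(a * g⁻¹, b), 1⟩ : W) * w₀ := by
      rw [hw₀]
      simp only [hmulW, hinvW, hφ1, hφt, hinv, hsq, Prod.inv_mk, Prod.swap_prod_mk,
        Prod.mk_mul_mk, mul_one, one_mul, inv_one, mul_inv_cancel, inv_mul_cancel,
        mul_assoc, SemidirectProduct.ext_iff, Prod.mk.injEq, and_self, and_true, true_and]
    rw [e]
    have h1 : (⟨(a * g⁻¹, b), 1⟩ : W) ∈ H := by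
      have := mul_mem (hleft (a * g⁻¹)) (hright b)
      rwa [hmul00, mul_one, one_mul] at this
    exact mul_mem h1 hwH
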